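/- Let ℓ ≥ 1 and let C' = A'B' be the (2^ℓ × 2^ℓ·2ℓ) matrix defined as follows: rows of A' are indexed by x ∈ {0,1}^ℓ in lexicographic order with A'[x, j] = x_j for 1 ≤ j ≤ ℓ and A'[x, j] = 1 for ℓ < j ≤ 2ℓ; columns of B' are indexed by (y, k) ∈ {0,1}^ℓ × {1, …, 2ℓ} in lexicographic order with B'[i,(y,k)] = 1 if i = k ≤ ℓ, B'[i,(y,k)] = y_{k−ℓ} if i = k > ℓ, and B'[i,(y,k)] = 0 otherwise. Then every SLP over the alphabet {0,1} that generates the string obtained by reading the entries of C' row by row has size at least 2^{2ℓ}/(2ℓ). -/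

import Mathlib

/-- A rule of a straight-line program: either a terminal symbol, or the ordered
pair `(j, k)` of the indices of two strictly earlier rules to be concatenated. -/
inductive SLPRule (α : Type*) where
  | sym (a : α)
  | pair (j k : ℕ)

/-- A straight-line program (SLP) over the alphabet `α`: a finite sequence of
rules, where each pair rule may only reference strictly earlier rules. -/
structure SLP (α : Type*) where
  rules : List (SLPRule α)
  wf : ∀ i : Fin rules.length, match rules.get i with
    | .sym _ => True
    | .pair j k => j < i.val ∧ k < i.val

/-- The size of an SLP is its number of rules. -/
def SLP.size {α : Type*} (G : SLP α) : ℕ := G.rules.length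

/-- The list of the strings `eval(R_1), …, eval(R_n)` generated by the
successive rules of an SLP: a symbol rule evaluates to the corresponding
one-letter string, and a pair rule `(j, k)` evaluates to the concatenation
of the evaluations of the (earlier) rules `R_j` and `R_k`. -/
def SLP.evals {α : Type*} (G : SLP α) : List (List α) :=
  G.rules.foldl (fun acc r =>
    acc ++ [match r with
      | .sym a => [a]
      | .pair j k => acc.getD j [] ++ acc.getD k []]) []

/-- An SLP generates the string which its last rule evaluates to. -/
def SLP.generates {α : Type*} (G : SLP α) (s : List α) : Prop :=
  G.evals.getLast? = some s

/-- The `j`-th bit (0-indexed, most significant bit first) of the `ℓ`-bit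
binary representation of `x`. -/
def bitOf (ℓ x j : ℕ) : ℕ := x / 2 ^ (ℓ - 1 - j) % 2

namespace SLPaux

variable {α : Type*}

def gfun (acc : List (List α)) (r : SLPRule α) : List α :=
  match r with
  | .sym a => [a]
  | .pair j k => acc.getD j [] ++ acc.getD k []

def ffun (acc : List (List α)) (r : SLPRule α) : List (List α) := acc ++ [gfun acc r]

lemma evals_eq (G : SLP α) : G.evals = G.rules.foldl ffun [] := by
  unfold SLP.evals
  congr 1

lemma foldl_ffun_prefix (rs : List (SLPRule α)) (init : List (List α)) :
    init <+: rs.foldl ffun init := by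
  induction rs generalizing init with
  | nil => exact List.prefix_refl _
  | cons r rs ih =>
    exact (List.prefix_append init [gfun init r]).trans (ih _)

lemma foldl_ffun_length (rs : List (SLPRule α)) (init : List (List α)) :
    (rs.foldl ffun init).length = init.length + rs.length := by
  induction rs generalizing init with
  | nil => simp
  | cons r rs ih =>
    simp only [List.foldl_cons, ih, ffun]
    simp; omega

lemma evals_length (G : SLP α) : G.evals.length = G.rules.length := by
  rw [evals_eq]
  simpa using foldl_ffun_length G.rules []

lemma prefix_getD {l₁ l₂ : List (List α)} (h : l₁ <+: l₂) {i : ℕ} (hi : i < l₁.length) :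
    l₂.getD i [] = l₁.getD i [] := by
  obtain ⟨t, rfl⟩ := h
  rw [List.getD_eq_getElem?_getD, List.getD_eq_getElem?_getD, List.getElem?_append_left hi]

lemma evals_spec (G : SLP α) (i : ℕ) (hi : i < G.rules.length) :
    (∃ a, G.rules.get ⟨i, hi⟩ = .sym a ∧ G.evals.getD i [] = [a]) ∨
    (∃ j k, G.rules.get ⟨i, hi⟩ = .pair j k ∧ j < i ∧ k < i ∧
      G.evals.getD i [] = G.evals.getD j [] ++ G.evals.getD k []) := by
  have hAlen : ((G.rules.take i).foldl ffun ([] : List (List α))).length = i := by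
    rw [foldl_ffun_length]; simp; omega
  set A := (G.rules.take i).foldl ffun ([] : List (List α)) with hA
  have htake : G.rules.take (i + 1) = G.rules.take i ++ [G.rules.get ⟨i, hi⟩] := by
    rw [List.get_eq_getElem, List.take_concat_get']
  have hsplit : G.evals =
      List.foldl ffun (A ++ [gfun A (G.rules.get ⟨i, hi⟩)]) (G.rules.drop (i + 1)) := by
    conv_lhs => rw [evals_eq, ← List.take_append_drop (i + 1) G.rules]
    rw [List.foldl_append, htake, List.foldl_append]
    rfl
  have hpre : (A ++ [gfun A (G.rules.get ⟨i, hi⟩)]) <+: G.evals := by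
    rw [hsplit]; exact foldl_ffun_prefix _ _
  have hApre : A <+: G.evals := (List.prefix_append _ _).trans hpre
  have hgetDi : G.evals.getD i [] = gfun A (G.rules.get ⟨i, hi⟩) := by
    rw [prefix_getD hpre (by simp [hAlen])]
    rw [List.getD_eq_getElem?_getD, List.getElem?_append_right (by omega)]
    simp [hAlen]
  have hw := G.wf ⟨i, hi⟩
  revert hw
  cases hr : G.rules.get ⟨i, hi⟩ with
  | sym a =>
    intro _
    left
    exact ⟨a, rfl, by rw [hgetDi, hr]; rfl⟩
  | pair j k =>
    intro hw
    right
    have hji : j < i := by simpa using hw.1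
    have hki : k < i := by simpa using hw.2
    refine ⟨j, k, rfl, hji, hki, ?_⟩
    rw [hgetDi, hr]
    show A.getD j [] ++ A.getD k [] = _
    rw [prefix_getD hApre (by omega), prefix_getD hApre (by omega)]

lemma append_eq_split {a b pre t post : List α} (h : a ++ b = pre ++ t ++ post) :
    (∃ p q, a = p ++ t ++ q) ∨ (∃ p q, b = p ++ t ++ q) ∨
    (∃ r, 0 < r ∧ r < t.length ∧
      t = a.drop (a.length - r) ++ b.take (t.length - r)) := by
  rcases le_or_gt (pre.length + t.length) a.length with h1 | h1
  · left
    refine ⟨pre, a.drop (pre.length + t.length), ?_⟩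
    have hth := congrArg (List.take (pre.length + t.length)) h
    rw [List.take_append_of_le_length h1,
      List.take_append_of_le_length (by simp),
      List.take_of_length_le (show (pre ++ t).length ≤ pre.length + t.length by simp)] at hth
    conv_lhs => rw [← List.take_append_drop (pre.length + t.length) a]
    rw [hth]
  · rcases le_or_gt a.length pre.length with h2 | h2
    · right; left
      refine ⟨pre.drop a.length, post, ?_⟩
      have hth := congrArg (List.drop a.length) h
      rw [List.drop_left, List.append_assoc, List.drop_append_of_le_length h2] at hth
      rw [hth, List.append_assoc]
    · right; right
      refine ⟨a.length - pre.length, by omega, by omega, ?_⟩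
      have ht : ((a ++ b).drop pre.length).take t.length = t := by
        rw [h, List.append_assoc, List.drop_left, List.take_left]
      rw [List.drop_append_of_le_length h2.le, List.take_append,
        List.take_of_length_le (by rw [List.length_drop]; omega),
        List.length_drop] at ht
      rw [show a.length - (a.length - pre.length) = pre.length by omega]
      exact ht.symm

def crossFn (G : SLP α) (m : ℕ) (ir : ℕ × ℕ) : List α :=
  match G.rules.getD ir.1 (.pair 0 0) with
  | .sym _ => []
  | .pair j k =>
      (G.evals.getD j []).drop ((G.evals.getD j []).length - ir.2) ++
      (G.evals.getD k []).take (m - ir.2)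

lemma mem_cross [DecidableEq α] (G : SLP α) (m : ℕ) (hm : 2 ≤ m) :
    ∀ i, i < G.rules.length → ∀ t pre post : List α, t.length = m →
      G.evals.getD i [] = pre ++ t ++ post →
      t ∈ ((Finset.range G.rules.length) ×ˢ (Finset.Ioo 0 m)).image (crossFn G m) := by
  intro i
  induction i using Nat.strong_induction_on with
  | _ i ih =>
    intro hi t pre post htl heq
    rcases evals_spec G i hi with ⟨a, hr, he⟩ | ⟨j, k, hr, hj, hk, he⟩
    · rw [he] at heq
      have := congrArg List.length heq
      simp [htl] at this
      omega
    · rw [he] at heq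
      rcases append_eq_split heq with ⟨p, q, hpq⟩ | ⟨p, q, hpq⟩ | ⟨r, hr0, hrm, hteq⟩
      · exact ih j hj (hj.trans hi) t p q htl hpq
      · exact ih k hk (hk.trans hi) t p q htl hpq
      · refine Finset.mem_image.2 ⟨(i, r), Finset.mem_product.2
          ⟨Finset.mem_range.2 hi, Finset.mem_Ioo.2 ⟨hr0, by omega⟩⟩, ?_⟩
        have hgd : G.rules.getD i (.pair 0 0) = .pair j k := by
          rw [List.getD_eq_getElem G.rules _ hi]; exact hr
        simp only [crossFn, hgd]
        rw [← htl]
        exact hteq.symm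

lemma bitOf_lt_two (ℓ x j : ℕ) : bitOf ℓ x j < 2 := Nat.mod_lt _ two_pos

lemma bitOf_inj {ℓ x x' : ℕ} (hx : x < 2 ^ ℓ) (hx' : x' < 2 ^ ℓ)
    (h : ∀ j, j < ℓ → bitOf ℓ x j = bitOf ℓ x' j) : x = x' := by
  apply Nat.eq_of_testBit_eq
  intro i
  rcases lt_or_ge i ℓ with hi | hi
  · have hb := h (ℓ - 1 - i) (by omega)
    unfold bitOf at hb
    rw [show ℓ - 1 - (ℓ - 1 - i) = i by omega] at hb
    rw [Nat.testBit_eq_decide_div_mod_eq, Nat.testBit_eq_decide_div_mod_eq, hb]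
  · rw [Nat.testBit_lt_two_pow (lt_of_lt_of_le hx (Nat.pow_le_pow_right (by norm_num) hi)),
      Nat.testBit_lt_two_pow (lt_of_lt_of_le hx' (Nat.pow_le_pow_right (by norm_num) hi))]

def blockFn (ℓ x y : ℕ) : List (Fin 2) :=
  (List.range (2 * ℓ)).map (fun k =>
    if (if k < ℓ then bitOf ℓ x k else bitOf ℓ y (k - ℓ)) = 1 then (1 : Fin 2) else 0)

lemma blockFn_length (ℓ x y : ℕ) : (blockFn ℓ x y).length = 2 * ℓ := by simp [blockFn]

lemma if_fin_inj {a b : ℕ} (ha : a < 2) (hb : b < 2)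
    (h : (if a = 1 then (1 : Fin 2) else 0) = if b = 1 then (1 : Fin 2) else 0) : a = b := by
  interval_cases a <;> interval_cases b <;> simp_all

lemma blockFn_getD (ℓ x y k : ℕ) (hk : k < 2 * ℓ) :
    (blockFn ℓ x y).getD k 0 =
      (if (if k < ℓ then bitOf ℓ x k else bitOf ℓ y (k - ℓ)) = 1 then (1 : Fin 2) else 0) := by
  rw [List.getD_eq_getElem _ _ (by simpa [blockFn] using hk)]
  simp [blockFn]

lemma blockFn_entry (ℓ x x' y y' : ℕ) (h : blockFn ℓ x y = blockFn ℓ x' y')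
    (k : ℕ) (hk : k < 2 * ℓ) :
    (if k < ℓ then bitOf ℓ x k else bitOf ℓ y (k - ℓ)) =
    (if k < ℓ then bitOf ℓ x' k else bitOf ℓ y' (k - ℓ)) := by
  have h1 := congrArg (fun l => l.getD k (0 : Fin 2)) h
  simp only [blockFn_getD ℓ x y k hk, blockFn_getD ℓ x' y' k hk] at h1
  refine if_fin_inj ?_ ?_ h1 <;> split <;> exact bitOf_lt_two ..

end SLPaux

/-- with `C' = A'B'` as in the construction, every SLP over the
alphabet `{0,1}` generating the string obtained by reading the entries of `C'`
row by row (a string of `0`s and `1`s, here identified with elements of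
`Fin 2`) has size at least `2^{2ℓ}/(2ℓ)`. -/
theorem stmt13 (ℓ : ℕ) (hℓ : 1 ≤ ℓ) :
    let A' : Matrix (Fin (2 ^ ℓ)) (Fin (2 * ℓ)) ℕ :=
      fun x j => if (j : ℕ) < ℓ then bitOf ℓ x j else 1
    let B' : Matrix (Fin (2 * ℓ)) (Fin (2 ^ ℓ) × Fin (2 * ℓ)) ℕ :=
      fun i yk => if (i : ℕ) = (yk.2 : ℕ) then
          (if (yk.2 : ℕ) < ℓ then 1 else bitOf ℓ yk.1 ((yk.2 : ℕ) - ℓ))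
        else 0
    -- the entries of `C' = A'B'` (each of which is `0` or `1`) read row by
    -- row, as a string over the alphabet `{0,1}`
    let rowStr : List (Fin 2) :=
      (((List.finRange (2 ^ ℓ)).map (fun x =>
        ((List.finRange (2 ^ ℓ)).map (fun y =>
          (List.finRange (2 * ℓ)).map (fun k => (A' * B') x (y, k)))).flatten)).flatten).map
        (fun v => if v = 1 then (1 : Fin 2) else 0)
    ∀ G : SLP (Fin 2), G.generates rowStr →
      (2 : ℝ) ^ (2 * ℓ) / (2 * ℓ) ≤ (G.size : ℝ) := by
  intro A' B' rowStr G hG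
  have hA : A' = (fun x j => if (j : ℕ) < ℓ then bitOf ℓ x j else 1 :
      Matrix (Fin (2 ^ ℓ)) (Fin (2 * ℓ)) ℕ) := rfl
  have hB : B' = (fun i yk => if (i : ℕ) = (yk.2 : ℕ) then
      (if (yk.2 : ℕ) < ℓ then 1 else bitOf ℓ yk.1 ((yk.2 : ℕ) - ℓ)) else 0 :
      Matrix (Fin (2 * ℓ)) (Fin (2 ^ ℓ) × Fin (2 * ℓ)) ℕ) := rfl
  have hentry : ∀ (x y : Fin (2 ^ ℓ)) (k : Fin (2 * ℓ)),
      (A' * B') x (y, k) = if (k : ℕ) < ℓ then bitOf ℓ x k else bitOf ℓ y ((k : ℕ) - ℓ) := by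
    intro x y k
    rw [Matrix.mul_apply]
    rw [Finset.sum_eq_single k]
    · by_cases hk : (k : ℕ) < ℓ <;> simp [hA, hB, hk]
    · intro i _ hik
      simp only [hB]
      rw [if_neg (fun hc => hik (Fin.ext hc))]
      exact mul_zero _
    · intro hc
      exact absurd (Finset.mem_univ k) hc
  have hrow : rowStr = ((List.finRange (2 ^ ℓ)).map (fun x : Fin (2 ^ ℓ) =>
      ((List.finRange (2 ^ ℓ)).map (fun y : Fin (2 ^ ℓ) =>
        SLPaux.blockFn ℓ (x : ℕ) (y : ℕ))).flatten)).flatten := by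
    show (((List.finRange (2 ^ ℓ)).map _).flatten).map _ = _
    rw [List.map_flatten, List.map_map]
    congr 1
    apply List.map_congr_left
    intro x _
    simp only [Function.comp]
    rw [List.map_flatten, List.map_map]
    congr 1
    apply List.map_congr_left
    intro y _
    simp only [Function.comp, List.map_map]
    apply List.ext_getElem
    · simp [SLPaux.blockFn]
    · intro k h1 h2
      simp only [List.getElem_map, Function.comp_apply, SLPaux.blockFn, List.getElem_range]
      rw [hentry]
      rw [show ((List.finRange (2 * ℓ))[k]'(by simpa [SLPaux.blockFn] using h2) : ℕ) = k from by
        simp [List.finRange, List.getElem_ofFn]]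
  have hinf : ∀ x y : Fin (2 ^ ℓ), SLPaux.blockFn ℓ (x : ℕ) (y : ℕ) <:+: rowStr := by
    intro x y
    rw [hrow]
    refine List.IsInfix.trans ?_
      (List.infix_of_mem_flatten (List.mem_map_of_mem (List.mem_finRange x)))
    exact List.infix_of_mem_flatten (List.mem_map_of_mem (List.mem_finRange y))
  have hne : G.evals ≠ [] := fun h => by simp [SLP.generates, h] at hG
  have hn : 0 < G.rules.length := by
    rw [← SLPaux.evals_length]
    exact List.length_pos_iff.2 hne
  have hlast : G.evals.getD (G.rules.length - 1) [] = rowStr := by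
    have h2 := hG
    rw [SLP.generates, List.getLast?_eq_getElem?, SLPaux.evals_length] at h2
    rw [List.getD_eq_getElem?_getD, h2]
    rfl
  have hpow : 0 < 2 ^ ℓ := Nat.pow_pos (by norm_num)
  have hm2 : 2 ≤ 2 * ℓ := by omega
  have hsub : ∀ z, z < 2 ^ ℓ * 2 ^ ℓ →
      SLPaux.blockFn ℓ (z / 2 ^ ℓ) (z % 2 ^ ℓ) ∈
        ((Finset.range G.rules.length) ×ˢ (Finset.Ioo 0 (2 * ℓ))).image
          (SLPaux.crossFn G (2 * ℓ)) := by
    intro z hz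
    have hx : z / 2 ^ ℓ < 2 ^ ℓ := Nat.div_lt_of_lt_mul (by omega)
    have hy : z % 2 ^ ℓ < 2 ^ ℓ := Nat.mod_lt _ hpow
    obtain ⟨pre, post, hps⟩ := hinf ⟨z / 2 ^ ℓ, hx⟩ ⟨z % 2 ^ ℓ, hy⟩
    exact SLPaux.mem_cross G (2 * ℓ) hm2 (G.rules.length - 1) (by omega) _ pre post
      (SLPaux.blockFn_length ..) (by rw [hlast, ← hps])
  have hinj : Set.InjOn (fun z => SLPaux.blockFn ℓ (z / 2 ^ ℓ) (z % 2 ^ ℓ))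
      ↑(Finset.range (2 ^ ℓ * 2 ^ ℓ)) := by
    intro z hz z' hz' h
    simp only [Finset.coe_range, Set.mem_Iio] at hz hz'
    have hx : z / 2 ^ ℓ < 2 ^ ℓ := Nat.div_lt_of_lt_mul (by omega)
    have hx' : z' / 2 ^ ℓ < 2 ^ ℓ := Nat.div_lt_of_lt_mul (by omega)
    have hy : z % 2 ^ ℓ < 2 ^ ℓ := Nat.mod_lt _ hpow
    have hy' : z' % 2 ^ ℓ < 2 ^ ℓ := Nat.mod_lt _ hpow
    have hxx : z / 2 ^ ℓ = z' / 2 ^ ℓ := by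
      refine SLPaux.bitOf_inj hx hx' (fun j hj => ?_)
      have hh := SLPaux.blockFn_entry ℓ _ _ _ _ h j (by omega)
      rwa [if_pos hj, if_pos hj] at hh
    have hyy : z % 2 ^ ℓ = z' % 2 ^ ℓ := by
      refine SLPaux.bitOf_inj hy hy' (fun j hj => ?_)
      have hh := SLPaux.blockFn_entry ℓ _ _ _ _ h (ℓ + j) (by omega)
      rw [if_neg (by omega), if_neg (by omega)] at hh
      simpa using hh
    have e1 := Nat.div_add_mod z (2 ^ ℓ)
    have e2 := Nat.div_add_mod z' (2 ^ ℓ)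
    rw [← e1, hxx, hyy]
    exact e2
  have hcard : 2 ^ ℓ * 2 ^ ℓ ≤ G.rules.length * (2 * ℓ) := by
    have h1 : ((Finset.range (2 ^ ℓ * 2 ^ ℓ)).image
        (fun z => SLPaux.blockFn ℓ (z / 2 ^ ℓ) (z % 2 ^ ℓ))).card ≤
        (((Finset.range G.rules.length) ×ˢ (Finset.Ioo 0 (2 * ℓ))).image
          (SLPaux.crossFn G (2 * ℓ))).card := by
      apply Finset.card_le_card
      intro w hw
      obtain ⟨z, hz, rfl⟩ := Finset.mem_image.1 hw
      exact hsub z (Finset.mem_range.1 hz)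
    calc 2 ^ ℓ * 2 ^ ℓ
        = ((Finset.range (2 ^ ℓ * 2 ^ ℓ)).image
            (fun z => SLPaux.blockFn ℓ (z / 2 ^ ℓ) (z % 2 ^ ℓ))).card := by
          rw [Finset.card_image_of_injOn hinj, Finset.card_range]
      _ ≤ _ := h1
      _ ≤ ((Finset.range G.rules.length) ×ˢ (Finset.Ioo 0 (2 * ℓ))).card :=
          Finset.card_image_le
      _ = G.rules.length * (2 * ℓ - 1) := by
          rw [Finset.card_product, Finset.card_range, Nat.card_Ioo]
          norm_num
      _ ≤ G.rules.length * (2 * ℓ) := Nat.mul_le_mul_left _ (by omega)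
  have hl0 : (0 : ℝ) < (ℓ : ℝ) := by exact_mod_cast Nat.lt_of_lt_of_le Nat.zero_lt_one hℓ
  rw [div_le_iff₀ (by linarith)]
  have h2 : (2 : ℝ) ^ (2 * ℓ) = ((2 ^ ℓ * 2 ^ ℓ : ℕ) : ℝ) := by
    push_cast
    rw [← pow_add, two_mul]
  rw [h2]
  calc ((2 ^ ℓ * 2 ^ ℓ : ℕ) : ℝ) ≤ ((G.rules.length * (2 * ℓ) : ℕ) : ℝ) := by
        exact_mod_cast hcard
    _ = (G.size : ℝ) * (2 * (ℓ : ℝ)) := by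
        push_cast
        rfl
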